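/- arXiv:0911.3474 — 3 statements merged into one kernel-verified Lean document; each statement's English description precedes it below -/
import Mathlib

section
/- Let (x_k) be a sequence in B̄(a,ρ) and (t_k) a sequence of positive reals such that H(x_k) ≠ 0 and x_{k+1} = x_k − t_k·H(x_k)/‖H(x_k)‖ for every k (subgradient algorithm). If t_k → 0 and ∑ t_k = +∞, then infDist(x_k, 𝔐_μ) → 0 and f(x_k) → f_*. -/
open MeasureTheory Metric Filter

open scoped RealInnerProductSpace

namespace Stmt13Aux

variable {n : ℕ} {a : EuclideanSpace ℝ (Fin n)} {ρ : ℝ}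
  {μ : Measure (EuclideanSpace ℝ (Fin n))} [IsProbabilityMeasure μ]

local notation "E" => EuclideanSpace ℝ (Fin n)

lemma ae_ball (hsupp : {x : E | ∀ U ∈ nhds x, 0 < μ U} ⊆ ball a ρ) :
    ∀ᵐ p ∂μ, p ∈ ball a ρ := by
  have h := Measure.everywherePosSubset_ae_eq_of_measure_ne_top (μ := μ)
    MeasurableSet.univ (measure_ne_top μ _)
  rw [MeasureTheory.ae_eq_set] at h
  have he : μ.everywherePosSubset Set.univ = {x | ∀ U ∈ nhds x, 0 < μ U} := by
    ext p; simp [Measure.everywherePosSubset, nhdsWithin_univ]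
  have h0 : μ (μ.everywherePosSubset Set.univ)ᶜ = 0 := by
    have := h.2; rwa [Set.compl_eq_univ_diff]
  rw [Filter.eventually_iff, mem_ae_iff]
  refine measure_mono_null ?_ h0
  intro p hp hps
  exact hp (hsupp (he ▸ hps))

lemma intnorm (hb : ∀ᵐ p ∂μ, p ∈ ball a ρ) (x : E) :
    Integrable (fun p => ‖x - p‖) μ := by
  refine (integrable_const (‖x - a‖ + ρ)).mono' ?_ ?_
  · exact (continuous_const.sub continuous_id).norm.aestronglyMeasurable
  · filter_upwards [hb] with p hp
    rw [Real.norm_eq_abs, abs_norm]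
    calc ‖x - p‖ ≤ ‖x - a‖ + ‖a - p‖ := norm_sub_le_norm_sub_add_norm_sub x a p
    _ ≤ ‖x - a‖ + ρ := by
        have : dist a p < ρ := by rw [dist_comm]; exact mem_ball.mp hp
        have h2 : ‖a - p‖ = dist a p := (dist_eq_norm a p).symm
        linarith

lemma intvec (x : E) :
    Integrable (fun p => ‖x - p‖⁻¹ • (x - p) : E → E) μ := by
  refine (integrable_const (1:ℝ)).mono' ?_ ?_
  · exact (((measurable_const.sub measurable_id).norm.inv).smul
      (measurable_const.sub measurable_id)).aestronglyMeasurable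
  · refine Filter.Eventually.of_forall fun p => ?_
    rw [norm_smul, norm_inv, norm_norm]
    rcases eq_or_ne x p with h | h
    · simp [h]
    · rw [inv_mul_cancel₀ (norm_ne_zero_iff.mpr (sub_ne_zero_of_ne h))]

lemma Hnorm (x : E) :
    ‖(∫ p in ({x}ᶜ : Set E), ‖x - p‖⁻¹ • (x - p) ∂μ : E)‖ ≤ 1 := by
  have h : ‖(∫ p in ({x}ᶜ : Set E), ‖x - p‖⁻¹ • (x - p) ∂μ : E)‖ ≤
      1 * (μ ({x}ᶜ : Set E)).toReal := by
    refine norm_setIntegral_le_of_norm_le_const (measure_lt_top μ _) ?_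
    · intro p hp
      rw [norm_smul, norm_inv, norm_norm,
        inv_mul_cancel₀ (norm_ne_zero_iff.mpr (sub_ne_zero_of_ne (Ne.symm hp)))]
  refine h.trans ?_
  have : (μ ({x}ᶜ : Set E)).toReal ≤ 1 := by
    have := measure_mono (μ := μ) (Set.subset_univ ({x}ᶜ : Set E))
    simpa using ENNReal.toReal_mono (by simp) this
  linarith

lemma subgrad (hb : ∀ᵐ p ∂μ, p ∈ ball a ρ) (x y : E) :
    (∫ p, ‖x - p‖ ∂μ) - (∫ p, ‖y - p‖ ∂μ) ≤
      ⟪(∫ p in ({x}ᶜ : Set E), ‖x - p‖⁻¹ • (x - p) ∂μ : E), x - y⟫ := by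
  set S : Set E := {x}ᶜ with hS
  have hSm : MeasurableSet S := (measurableSet_singleton x).compl
  have hix := intnorm hb x
  have hiy := intnorm hb y
  have hfx : (∫ p, ‖x - p‖ ∂μ) = ∫ p in S, ‖x - p‖ ∂μ := by
    rw [← integral_add_compl hSm hix, compl_compl]
    have : (∫ p in ({x} : Set E), ‖x - p‖ ∂μ) = 0 := by
      apply setIntegral_eq_zero_of_forall_eq_zero
      intro p hp; simp [Set.mem_singleton_iff.mp hp]
    rw [this, add_zero]
  have hfy : (∫ p in S, ‖y - p‖ ∂μ) ≤ ∫ p, ‖y - p‖ ∂μ := by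
    rw [← integral_add_compl hSm hiy, compl_compl]
    have : 0 ≤ ∫ p in ({x} : Set E), ‖y - p‖ ∂μ :=
      setIntegral_nonneg (measurableSet_singleton x) fun p _ => norm_nonneg _
    linarith
  have key : (∫ p in S, ‖x - p‖ ∂μ) - (∫ p in S, ‖y - p‖ ∂μ) ≤
      ∫ p in S, ⟪x - y, ‖x - p‖⁻¹ • (x - p)⟫ ∂μ := by
    rw [← integral_sub (hix.restrict) (hiy.restrict)]
    refine setIntegral_mono_on ((hix.restrict).sub (hiy.restrict)) ?_ hSm ?_
    · exact (innerSL ℝ (x - y)).integrable_comp ((intvec x).restrict)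
    · intro p hp
      have hxp : x - p ≠ 0 := sub_ne_zero_of_ne (Ne.symm hp)
      have hn : ‖x - p‖ ≠ 0 := norm_ne_zero_iff.mpr hxp
      have h1 : ⟪x - p, ‖x - p‖⁻¹ • (x - p)⟫ = ‖x - p‖ := by
        rw [real_inner_smul_right, real_inner_self_eq_norm_sq]
        field_simp
      have h2 : ⟪y - p, ‖x - p‖⁻¹ • (x - p)⟫ ≤ ‖y - p‖ := by
        have := real_inner_le_norm (y - p) (‖x - p‖⁻¹ • (x - p))
        have hu : ‖‖x - p‖⁻¹ • (x - p)‖ = 1 := by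
          rw [norm_smul, norm_inv, norm_norm, inv_mul_cancel₀ hn]
        rw [hu, mul_one] at this; exact this
      have h3 : (x : E) - y = (x - p) - (y - p) := by abel
      rw [h3, inner_sub_left, h1]
      linarith
  have hlin : (∫ p in S, ⟪x - y, ‖x - p‖⁻¹ • (x - p)⟫ ∂μ) =
      ⟪x - y, (∫ p in S, ‖x - p‖⁻¹ • (x - p) ∂μ : E)⟫ :=
    integral_inner ((intvec x).restrict) (x - y)
  rw [real_inner_comm, ← hlin, hfx]
  linarith

lemma lips (hb : ∀ᵐ p ∂μ, p ∈ ball a ρ) (x y : E) :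
    (∫ p, ‖x - p‖ ∂μ) - (∫ p, ‖y - p‖ ∂μ) ≤ ‖x - y‖ := by
  rw [← integral_sub (intnorm hb x) (intnorm hb y)]
  calc (∫ p, (‖x - p‖ - ‖y - p‖) ∂μ) ≤ ∫ _, ‖x - y‖ ∂μ := by
        refine integral_mono ((intnorm hb x).sub (intnorm hb y)) (integrable_const _)
          fun p => ?_
        have := norm_sub_norm_le (x - p) (y - p)
        have h3 : (x : E) - p - (y - p) = x - y := by abel
        rw [h3] at this; exact this
    _ = ‖x - y‖ := by simp

end Stmt13Aux

/-- Euclidean case of Theorem 4.6, first part: convergence of the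
subgradient algorithm.  If `x_{k+1} = x_k - t_k H(x_k)/‖H(x_k)‖` with `t_k → 0` and
`∑ t_k = +∞`, then `infDist(x_k, 𝔐_μ) → 0` and `f(x_k) → f_*`. -/
theorem stmt13 {n : ℕ} (hn : 1 ≤ n) (a : EuclideanSpace ℝ (Fin n)) (ρ : ℝ) (hρ : 0 < ρ)
    (μ : Measure (EuclideanSpace ℝ (Fin n))) [IsProbabilityMeasure μ]
    (hsupp : {x : EuclideanSpace ℝ (Fin n) | ∀ U ∈ nhds x, 0 < μ U} ⊆ ball a ρ)
    (f : EuclideanSpace ℝ (Fin n) → ℝ)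
    (hf : ∀ x, f x = ∫ p, ‖x - p‖ ∂μ)
    (H : EuclideanSpace ℝ (Fin n) → EuclideanSpace ℝ (Fin n))
    (hH : ∀ x, H x = ∫ p in ({x}ᶜ : Set (EuclideanSpace ℝ (Fin n))), ‖x - p‖⁻¹ • (x - p) ∂μ)
    (fstar : ℝ) (hfstar : fstar = sInf (f '' closedBall a ρ))
    (M : Set (EuclideanSpace ℝ (Fin n)))
    (hM : M = {y ∈ closedBall a ρ | IsMinOn f (closedBall a ρ) y})
    (x : ℕ → EuclideanSpace ℝ (Fin n)) (t : ℕ → ℝ)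
    (hxball : ∀ k, x k ∈ closedBall a ρ)
    (hHx : ∀ k, H (x k) ≠ 0)
    (hrec : ∀ k, x (k + 1) = x k - (t k / ‖H (x k)‖) • H (x k))
    (htpos : ∀ k, 0 < t k)
    (ht0 : Tendsto t atTop (nhds 0))
    (htsum : Tendsto (fun m => ∑ k ∈ Finset.range m, t k) atTop atTop) :
    Tendsto (fun k => infDist (x k) M) atTop (nhds 0) ∧
    Tendsto (fun k => f (x k)) atTop (nhds fstar) := by
  have hb : ∀ᵐ p ∂μ, p ∈ ball a ρ := Stmt13Aux.ae_ball hsupp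
  -- Lipschitz property of `f`
  have hlip : ∀ u v, f u - f v ≤ ‖u - v‖ := fun u v => by
    rw [hf u, hf v]; exact Stmt13Aux.lips hb u v
  have hcont : Continuous f := by
    have : LipschitzWith 1 f := by
      refine LipschitzWith.of_dist_le_mul fun u v => ?_
      rw [Real.dist_eq, dist_eq_norm, NNReal.coe_one, one_mul]
      refine abs_sub_le_iff.mpr ⟨hlip u v, ?_⟩
      rw [norm_sub_rev]; exact hlip v u
    exact this.continuous
  -- existence of a minimizer
  have hcompact : IsCompact (closedBall a ρ) := isCompact_closedBall a ρ
  obtain ⟨y₀, hy₀B, hy₀min⟩ := hcompact.exists_isMinOn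
    ⟨a, mem_closedBall_self hρ.le⟩ hcont.continuousOn
  have hy₀M : y₀ ∈ M := by rw [hM]; exact ⟨hy₀B, hy₀min⟩
  have hMne : M.Nonempty := ⟨y₀, hy₀M⟩
  have hfstar' : fstar = f y₀ := by
    rw [hfstar]
    refine IsLeast.csInf_eq ⟨⟨y₀, hy₀B, rfl⟩, ?_⟩
    rintro _ ⟨z, hz, rfl⟩
    exact isMinOn_iff.mp hy₀min z hz
  have hfge : ∀ z ∈ closedBall a ρ, fstar ≤ f z := fun z hz =>
    hfstar' ▸ isMinOn_iff.mp hy₀min z hz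
  have hfy : ∀ y ∈ M, f y = fstar := by
    intro y hy
    rw [hM] at hy
    exact le_antisymm (hfstar' ▸ isMinOn_iff.mp hy.2 y₀ hy₀B) (hfge y hy.1)
  -- M is compact
  have hMeq : M = closedBall a ρ ∩ f ⁻¹' Set.Iic fstar := by
    rw [hM]; ext z
    constructor
    · rintro ⟨hzB, hzmin⟩
      exact ⟨hzB, by simpa using hfstar' ▸ isMinOn_iff.mp hzmin y₀ hy₀B⟩
    · rintro ⟨hzB, hzle⟩
      refine ⟨hzB, isMinOn_iff.mpr fun w hw => ?_⟩
      exact le_trans (Set.mem_Iic.mp hzle) (hfge w hw)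
  have hMclosed : IsClosed M := by
    rw [hMeq]; exact Metric.isClosed_closedBall.inter (IsClosed.preimage hcont isClosed_Iic)
  have hMcompact : IsCompact M :=
    hcompact.of_isClosed_subset hMclosed (by rw [hMeq]; exact Set.inter_subset_left)
  -- f z - fstar ≤ infDist z M
  have hsub : ∀ z ∈ closedBall a ρ, f z - fstar ≤ infDist z M := by
    intro z hz
    obtain ⟨y, hyM, hyd⟩ := hMcompact.exists_infDist_eq_dist hMne z
    rw [hyd, dist_eq_norm, ← hfy y hyM]
    exact hlip z y
  -- the positive gap δ at distance ε from M
  have hdelta : ∀ ε : ℝ, 0 < ε → ∃ δ : ℝ, 0 < δ ∧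
      ∀ z ∈ closedBall a ρ, ε ≤ infDist z M → fstar + δ ≤ f z := by
    intro ε hε
    set K := {z ∈ closedBall a ρ | ε ≤ infDist z M} with hK
    by_cases hKne : K.Nonempty
    · have hKclosed : IsClosed K := by
        have : K = closedBall a ρ ∩ (fun z => infDist z M) ⁻¹' Set.Ici ε := by
          ext z; simp [hK, Set.mem_sep_iff]
        rw [this]
        exact Metric.isClosed_closedBall.inter (IsClosed.preimage (continuous_infDist_pt M) isClosed_Ici)
      have hKcpt : IsCompact K := hcompact.of_isClosed_subset hKclosed fun z hz => hz.1
      obtain ⟨z₀, hz₀K, hz₀min⟩ := hKcpt.exists_isMinOn hKne hcont.continuousOn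
      refine ⟨f z₀ - fstar, ?_, ?_⟩
      · rcases lt_or_eq_of_le (hfge z₀ hz₀K.1) with h | h
        · linarith
        · exfalso
          have hz₀M : z₀ ∈ M := by
            rw [hM]
            exact ⟨hz₀K.1, isMinOn_iff.mpr fun w hw => h ▸ hfge w hw⟩
          have := infDist_zero_of_mem hz₀M
          have := hz₀K.2
          linarith
      · intro z hz hd
        have := isMinOn_iff.mp hz₀min z ⟨hz, hd⟩
        linarith
    · exact ⟨1, one_pos, fun z hz hd => absurd ⟨hz, hd⟩ fun h => hKne ⟨z, h⟩⟩
  -- step length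
  have hstep : ∀ k, ‖x (k + 1) - x k‖ = t k := by
    intro k
    have hHpos : 0 < ‖H (x k)‖ := norm_pos_iff.mpr (hHx k)
    have h1 : x (k + 1) - x k = -((t k / ‖H (x k)‖) • H (x k)) := by rw [hrec k]; abel
    rw [h1, norm_neg, norm_smul, Real.norm_eq_abs,
      abs_of_pos (div_pos (htpos k) hHpos), div_mul_cancel₀ _ hHpos.ne']
  have hdist1 : ∀ k, infDist (x (k + 1)) M ≤ infDist (x k) M + t k := by
    intro k
    have := infDist_le_infDist_add_dist (x := x (k + 1)) (y := x k) (s := M)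
    rwa [dist_eq_norm, hstep k] at this
  -- the descent inequality
  have hdescent : ∀ k, ∀ y ∈ M,
      ‖x (k + 1) - y‖ ^ 2 ≤ ‖x k - y‖ ^ 2 - 2 * t k * (f (x k) - fstar) + t k ^ 2 := by
    intro k y hyM
    have hHle : ‖H (x k)‖ ≤ 1 := by rw [hH]; exact Stmt13Aux.Hnorm _
    have hHpos : 0 < ‖H (x k)‖ := norm_pos_iff.mpr (hHx k)
    have hsg : f (x k) - f y ≤ ⟪H (x k), x k - y⟫ := by
      rw [hf, hf, hH]; exact Stmt13Aux.subgrad hb _ _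
    have hfyeq : f y = fstar := hfy y hyM
    set s := t k / ‖H (x k)‖ with hs
    have hspos : 0 < s := div_pos (htpos k) hHpos
    have hst : t k ≤ s := by
      rw [hs, le_div_iff₀ hHpos]
      exact mul_le_of_le_one_right (htpos k).le hHle
    have hexp : x (k + 1) - y = (x k - y) - s • H (x k) := by rw [hrec k]; abel
    rw [hexp, norm_sub_sq_real]
    have hbn : ‖s • H (x k)‖ ^ 2 = t k ^ 2 := by
      rw [norm_smul, Real.norm_eq_abs, abs_of_pos hspos, hs, div_mul_cancel₀ _ hHpos.ne']
    have hinner : ⟪x k - y, s • H (x k)⟫ = s * ⟪H (x k), x k - y⟫ := by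
      rw [real_inner_smul_right, real_inner_comm]
    rw [hinner, hbn]
    have h3 : f (x k) - fstar ≤ ⟪H (x k), x k - y⟫ := hfyeq ▸ hsg
    have h4 : 0 ≤ f (x k) - fstar := sub_nonneg.mpr (hfge _ (hxball k))
    nlinarith
  -- squared-distance decrease when far from M
  have hkey : ∀ δ : ℝ, 0 < δ →
      (∀ z ∈ closedBall a ρ, fstar + δ ≤ f z → True) → ∀ k, fstar + δ ≤ f (x k) → t k ≤ δ →
      infDist (x (k + 1)) M ^ 2 ≤ infDist (x k) M ^ 2 - t k * δ := by
    intro δ hδ _ k hfk htk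
    obtain ⟨y, hyM, hyd⟩ := hMcompact.exists_infDist_eq_dist hMne (x k)
    have h5 := hdescent k y hyM
    have h7 : infDist (x (k + 1)) M ≤ ‖x (k + 1) - y‖ := by
      rw [← dist_eq_norm]; exact infDist_le_dist_of_mem hyM
    have h8 : infDist (x (k + 1)) M ^ 2 ≤ ‖x (k + 1) - y‖ ^ 2 :=
      pow_le_pow_left₀ infDist_nonneg h7 2
    have h9 : ‖x k - y‖ = infDist (x k) M := by rw [hyd, dist_eq_norm]
    rw [h9] at h5
    nlinarith [htpos k]
  -- main convergence of infDist
  have hmain : Tendsto (fun k => infDist (x k) M) atTop (nhds 0) := by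
    rw [Metric.tendsto_atTop]
    intro ε hε
    set e := ε / 3 with he_def
    have he : 0 < e := by rw [he_def]; linarith
    obtain ⟨δ, hδ, hδp⟩ := hdelta e he
    obtain ⟨N, hN⟩ := Metric.tendsto_atTop.mp ht0 (min e δ) (lt_min he hδ)
    have hts : ∀ k, N ≤ k → t k ≤ δ ∧ t k ≤ e := by
      intro k hk
      have := hN k hk
      rw [Real.dist_eq, sub_zero, abs_of_pos (htpos k)] at this
      exact ⟨(this.trans_le (min_le_right _ _)).le, (this.trans_le (min_le_left _ _)).le⟩
    -- Step A : at some point after N the distance drops below e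
    have hA : ∃ k0, N ≤ k0 ∧ infDist (x k0) M < e := by
      by_contra hcon
      push_neg at hcon
      have hfar : ∀ k, N ≤ k → e ≤ infDist (x k) M := fun k hk => hcon k hk
      have hdec : ∀ k, N ≤ k →
          infDist (x (k + 1)) M ^ 2 ≤ infDist (x k) M ^ 2 - t k * δ := by
        intro k hk
        exact hkey δ hδ (fun _ _ _ => trivial) k
          (hδp _ (hxball k) (hfar k hk)) (hts k hk).1
      have hsum : ∀ m, infDist (x (N + m)) M ^ 2 + δ * ∑ k ∈ Finset.range m, t (N + k) ≤
          infDist (x N) M ^ 2 := by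
        intro m
        induction m with
        | zero => simp
        | succ m ih =>
          have h1 := hdec (N + m) (Nat.le_add_right N m)
          rw [Finset.sum_range_succ]
          have h2 : N + (m + 1) = N + m + 1 := rfl
          rw [h2]
          have h3 : δ * (∑ k ∈ Finset.range m, t (N + k) + t (N + m)) =
              δ * ∑ k ∈ Finset.range m, t (N + k) + t (N + m) * δ := by ring
          rw [h3]
          linarith
      obtain ⟨m, hm1, hm2⟩ := ((tendsto_atTop.mp htsum
        (∑ k ∈ Finset.range N, t k + infDist (x N) M ^ 2 / δ + 1)).and
        (eventually_ge_atTop N)).exists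
      have hmN : m = N + (m - N) := (Nat.add_sub_cancel' hm2).symm
      have hsplit : ∑ k ∈ Finset.range m, t k =
          ∑ k ∈ Finset.range N, t k + ∑ k ∈ Finset.range (m - N), t (N + k) := by
        have h := Finset.sum_range_add t N (m - N)
        rwa [← hmN] at h
      have h4 := hsum (m - N)
      have h5 : 0 ≤ infDist (x (N + (m - N))) M ^ 2 := sq_nonneg _
      have h6 : infDist (x N) M ^ 2 / δ + 1 ≤ ∑ k ∈ Finset.range (m - N), t (N + k) := by
        rw [hsplit] at hm1; linarith
      have h7 : δ * (infDist (x N) M ^ 2 / δ + 1) ≤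
          δ * ∑ k ∈ Finset.range (m - N), t (N + k) :=
        mul_le_mul_of_nonneg_left h6 hδ.le
      rw [mul_add, mul_div_cancel₀ _ hδ.ne', mul_one] at h7
      linarith
    obtain ⟨k0, hk0N, hk0⟩ := hA
    -- Step B : the distance stays below 2e afterwards
    have hB : ∀ j, infDist (x (k0 + j)) M ≤ 2 * e := by
      intro j
      induction j with
      | zero => simpa using by linarith
      | succ j ih =>
        have hKN : N ≤ k0 + j := le_trans hk0N (Nat.le_add_right k0 j)
        have h2 : k0 + (j + 1) = (k0 + j) + 1 := rfl
        rw [h2]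
        by_cases hc : infDist (x (k0 + j)) M < e
        · have := hdist1 (k0 + j)
          have := (hts _ hKN).2
          linarith
        · push_neg at hc
          have hd := hkey δ hδ (fun _ _ _ => trivial) (k0 + j)
            (hδp _ (hxball _) hc) (hts _ hKN).1
          have h8 : infDist (x ((k0 + j) + 1)) M ^ 2 ≤ (2 * e) ^ 2 := by
            have := mul_pos (htpos (k0 + j)) hδ
            have h9 : infDist (x (k0 + j)) M ^ 2 ≤ (2 * e) ^ 2 :=
              pow_le_pow_left₀ infDist_nonneg ih 2
            linarith
          exact (pow_le_pow_iff_left₀ infDist_nonneg (by linarith) two_ne_zero).mp h8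
    refine ⟨k0, fun k hk => ?_⟩
    have hj : k = k0 + (k - k0) := (Nat.add_sub_cancel' hk).symm
    have := hB (k - k0)
    rw [← hj] at this
    rw [Real.dist_eq, sub_zero, abs_of_nonneg infDist_nonneg]
    rw [he_def] at this
    linarith
  refine ⟨hmain, ?_⟩
  have h2 : Tendsto (fun k => f (x k) - fstar) atTop (nhds 0) :=
    squeeze_zero (fun k => sub_nonneg.mpr (hfge _ (hxball k)))
      (fun k => hsub _ (hxball k)) hmain
  have h3 := h2.add_const fstar
  simpa using h3
end

section
/- Set σ = sup{‖p − a‖ : p ∈ supp μ} (so σ < ρ). For every x ∈ B̄(a,ρ) with H(x) ≠ 0 and σ < ‖x − a‖, the exit time r_x = sup{t ∈ [0,2ρ] : x − t·H(x)/‖H(x)‖ ∈ B̄(a,ρ)} satisfies r_x ≥ 2‖x − a‖·(‖x − a‖ − σ)/(‖x − a‖ + σ). -/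
open MeasureTheory Metric
open scoped RealInnerProductSpace

/-- In a second-countable space, the complement of the set of points all of whose
neighborhoods have positive measure is null. -/
lemma null_compl_support {α : Type*} [TopologicalSpace α] [MeasurableSpace α]
    [SecondCountableTopology α] [OpensMeasurableSpace α]
    (μ : Measure α) : μ ({x : α | ∀ U ∈ nhds x, 0 < μ U}ᶜ) = 0 := by
  set 𝒩 : Set (Set α) := {U | IsOpen U ∧ μ U = 0} with h𝒩
  obtain ⟨T, hTc, hT𝒩, hTU⟩ := TopologicalSpace.isOpen_sUnion_countable 𝒩 (fun U hU => hU.1)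
  have hTnull : μ (⋃₀ T) = 0 := by
    rw [measure_sUnion_null_iff hTc]
    exact fun s hs => (hT𝒩 hs).2
  refine measure_mono_null ?_ (hTU ▸ hTnull)
  intro x hx
  simp only [Set.mem_compl_iff, Set.mem_setOf_eq, not_forall] at hx
  obtain ⟨U, hUn, hUpos⟩ := hx
  refine Set.mem_sUnion.2 ⟨interior U, ⟨isOpen_interior, ?_⟩, mem_interior_iff_mem_nhds.2 hUn⟩
  have : μ U = 0 := by
    by_contra h
    exact hUpos (pos_iff_ne_zero.2 h)
  exact measure_mono_null interior_subset this

set_option maxHeartbeats 1000000 in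
/-- Euclidean case of Lemma 4.8. With `σ = sup{‖p-a‖ : p ∈ supp μ}`,
for `x ∈ B̄(a,ρ)` with `H x ≠ 0` and `σ < ‖x-a‖`, the exit time
`r_x = sup{t ∈ [0,2ρ] : x - t H(x)/‖H(x)‖ ∈ B̄(a,ρ)}` satisfies
`r_x ≥ 2‖x-a‖(‖x-a‖-σ)/(‖x-a‖+σ)`. -/
theorem stmt15 {n : ℕ} (hn : 1 ≤ n) (a : EuclideanSpace ℝ (Fin n)) (ρ : ℝ) (hρ : 0 < ρ)
    (μ : Measure (EuclideanSpace ℝ (Fin n))) [IsProbabilityMeasure μ]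
    (hsupp : {x : EuclideanSpace ℝ (Fin n) | ∀ U ∈ nhds x, 0 < μ U} ⊆ ball a ρ)
    (f : EuclideanSpace ℝ (Fin n) → ℝ)
    (hf : ∀ x, f x = ∫ p, ‖x - p‖ ∂μ)
    (H : EuclideanSpace ℝ (Fin n) → EuclideanSpace ℝ (Fin n))
    (hH : ∀ x, H x = ∫ p in ({x}ᶜ : Set (EuclideanSpace ℝ (Fin n))), ‖x - p‖⁻¹ • (x - p) ∂μ)
    (σ : ℝ)
    (hσ : σ = sSup ((fun p => ‖p - a‖) '' {x : EuclideanSpace ℝ (Fin n) | ∀ U ∈ nhds x, 0 < μ U}))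
    (x : EuclideanSpace ℝ (Fin n)) (hx : x ∈ closedBall a ρ)
    (hHx : H x ≠ 0) (hσx : σ < ‖x - a‖)
    (r : ℝ)
    (hr : r = sSup {t ∈ Set.Icc (0 : ℝ) (2 * ρ) | x - (t / ‖H x‖) • H x ∈ closedBall a ρ}) :
    r ≥ 2 * ‖x - a‖ * (‖x - a‖ - σ) / (‖x - a‖ + σ) := by
  set S : Set (EuclideanSpace ℝ (Fin n)) := {x | ∀ U ∈ nhds x, 0 < μ U} with hS
  have hS0 : μ Sᶜ = 0 := null_compl_support μ
  -- S is nonempty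
  have hSne : S.Nonempty := by
    rcases Set.eq_empty_or_nonempty S with h | h
    · exfalso
      have : μ Set.univ = 0 := by
        have : Sᶜ = Set.univ := by rw [h]; simp
        rw [← this]; exact hS0
      simp [measure_univ] at this
    · exact h
  have hbdd : BddAbove ((fun p => ‖p - a‖) '' S) := by
    refine ⟨ρ, ?_⟩
    rintro y ⟨p, hp, rfl⟩
    have := hsupp hp
    rw [mem_ball, dist_eq_norm] at this
    exact this.le
  -- σ bounds distances to a on S, and σ ≥ 0
  have hσle : ∀ p ∈ S, ‖p - a‖ ≤ σ := fun p hp =>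
    hσ ▸ le_csSup hbdd ⟨p, hp, rfl⟩
  have hσ0 : 0 ≤ σ := by
    obtain ⟨p, hp⟩ := hSne
    exact le_trans (norm_nonneg _) (hσle p hp)
  set R := ‖x - a‖ with hR
  have hR0 : 0 < R := lt_of_le_of_lt hσ0 hσx
  have hRρ : R ≤ ρ := by rwa [mem_closedBall, dist_eq_norm] at hx
  set c : ℝ := R * (R - σ) / (R + σ) with hc
  have hc0 : 0 < c := by
    apply div_pos (mul_pos hR0 (by linarith)) (by linarith)
  have hcR : c ≤ R := by
    rw [div_le_iff₀ (by linarith : (0:ℝ) < R + σ)]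
    nlinarith
  -- x is not in S, and μ {x}ᶜ = 1
  have hxS : x ∉ S := fun h => absurd (hσle x h) (not_le.2 hσx)
  have hμx : μ {x} = 0 := by
    refine measure_mono_null ?_ hS0
    simpa using hxS
  have hμxc : μ ({x}ᶜ : Set (EuclideanSpace ℝ (Fin n))) = 1 := by
    rw [measure_compl (measurableSet_singleton x) (by simp [hμx]), hμx, measure_univ]
    simp
  -- the integrand
  set g : EuclideanSpace ℝ (Fin n) → EuclideanSpace ℝ (Fin n) :=
    fun p => ‖x - p‖⁻¹ • (x - p) with hg
  have hgmeas : Measurable g := by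
    exact Measurable.smul (((measurable_const.sub measurable_id).norm).inv)
      (measurable_const.sub measurable_id)
  have hgnorm : ∀ p, ‖g p‖ ≤ 1 := by
    intro p
    rcases eq_or_ne p x with rfl | hpx
    · simp [hg]
    · have h0 : ‖x - p‖ ≠ 0 := by
        simp [sub_eq_zero]; exact fun h => hpx h.symm
      rw [hg, norm_smul, norm_inv, norm_norm, inv_mul_cancel₀ h0]
  have hgint : Integrable g (μ.restrict {x}ᶜ) :=
    Integrable.mono' (integrable_const 1) hgmeas.aestronglyMeasurable
      (Filter.Eventually.of_forall hgnorm)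
  -- ‖H x‖ ≤ 1
  have hHnorm : ‖H x‖ ≤ 1 := by
    rw [hH]
    calc ‖∫ p in ({x}ᶜ : Set (EuclideanSpace ℝ (Fin n))), g p ∂μ‖
        ≤ 1 * ((μ.restrict {x}ᶜ) Set.univ).toReal :=
          norm_integral_le_of_norm_le_const (Filter.Eventually.of_forall hgnorm)
      _ = 1 := by rw [Measure.restrict_apply_univ, hμxc]; simp
  -- inner product lower bound
  set v := x - a with hv
  have hinner : ⟪v, H x⟫ ≥ c := by
    rw [hH]
    have heq : ⟪v, ∫ p in ({x}ᶜ : Set (EuclideanSpace ℝ (Fin n))), ‖x - p‖⁻¹ • (x - p) ∂μ⟫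
        = ∫ p in ({x}ᶜ : Set (EuclideanSpace ℝ (Fin n))), ⟪v, g p⟫ ∂μ := (integral_inner hgint v).symm
    rw [heq]
    have hae : ∀ᵐ p ∂(μ.restrict {x}ᶜ), c ≤ ⟪v, g p⟫ := by
      have h1 : ∀ᵐ p ∂(μ.restrict {x}ᶜ), p ∈ S := by
        rw [ae_iff]
        exact measure_mono_null (fun p hp => hp) (le_antisymm
          (le_trans (Measure.restrict_apply_le _ _) (le_of_eq hS0)) (by simp))
      have h2 : ∀ᵐ p ∂(μ.restrict {x}ᶜ), p ∈ ({x}ᶜ : Set (EuclideanSpace ℝ (Fin n))) :=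
        ae_restrict_mem (measurableSet_singleton x).compl
      filter_upwards [h1, h2] with p hpS hpx
      have hpa : ‖p - a‖ ≤ σ := hσle p hpS
      have hpxne : p ≠ x := hpx
      have hxp0 : 0 < ‖x - p‖ := by
        rw [norm_pos_iff, sub_ne_zero]
        exact fun h => hpxne h.symm
      have hxple : ‖x - p‖ ≤ R + σ := by
        calc ‖x - p‖ = ‖(x - a) - (p - a)‖ := by abel_nf
          _ ≤ ‖x - a‖ + ‖p - a‖ := norm_sub_le _ _
          _ ≤ R + σ := by rw [← hR]; linarith
      have hinp : ⟪v, x - p⟫ ≥ R * (R - σ) := by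
        have : x - p = v - (p - a) := by rw [hv]; abel
        rw [this, inner_sub_right]
        have h1 : ⟪v, v⟫ = R ^ 2 := by rw [real_inner_self_eq_norm_sq]
        have h2 : ⟪v, p - a⟫ ≤ R * σ := by
          calc ⟪v, p - a⟫ ≤ ‖v‖ * ‖p - a‖ := real_inner_le_norm _ _
            _ ≤ R * σ := by
                rw [hv, ← hR]
                exact mul_le_mul_of_nonneg_left hpa hR0.le
        nlinarith
      have : ⟪v, g p⟫ = ⟪v, x - p⟫ / ‖x - p‖ := by
        rw [hg]
        simp only [real_inner_smul_right]
        ring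
      rw [this, hc]
      have hnum0 : (0:ℝ) ≤ R * (R - σ) := by nlinarith
      exact div_le_div₀ (le_trans hnum0 hinp) hinp hxp0 hxple
    have hint : Integrable (fun p => ⟪v, g p⟫) (μ.restrict {x}ᶜ) := hgint.const_inner v
    calc c = c * ((μ.restrict {x}ᶜ) Set.univ).toReal := by
            rw [Measure.restrict_apply_univ, hμxc]; simp
      _ = ∫ _ in ({x}ᶜ : Set (EuclideanSpace ℝ (Fin n))), c ∂μ := by
            rw [integral_const, smul_eq_mul, mul_comm]; rfl
      _ ≤ ∫ p in ({x}ᶜ : Set (EuclideanSpace ℝ (Fin n))), ⟪v, g p⟫ ∂μ :=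
            integral_mono_ae (integrable_const c) hint hae
  -- so ⟪v, H x⟫ ≥ c ‖H x‖
  have hinner' : c * ‖H x‖ ≤ ⟪v, H x⟫ := by
    calc c * ‖H x‖ ≤ c * 1 := mul_le_mul_of_nonneg_left hHnorm hc0.le
      _ = c := mul_one c
      _ ≤ ⟪v, H x⟫ := hinner
  -- the candidate time
  set t0 : ℝ := 2 * c with ht0
  have hHpos : 0 < ‖H x‖ := norm_pos_iff.2 hHx
  set s : ℝ := t0 / ‖H x‖ with hs
  have hs0 : 0 ≤ s := div_nonneg (by linarith) hHpos.le
  have hsH : s * ‖H x‖ = t0 := div_mul_cancel₀ _ hHpos.ne'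
  -- the displaced point stays in the ball
  have hmem : x - s • H x ∈ closedBall a ρ := by
    rw [mem_closedBall, dist_eq_norm]
    have heq : x - s • H x - a = v - s • H x := by rw [hv]; abel
    rw [heq]
    have hsq : ‖v - s • H x‖ ^ 2 ≤ ρ ^ 2 := by
      rw [norm_sub_sq_real]
      have h1 : ⟪v, s • H x⟫ = s * ⟪v, H x⟫ := real_inner_smul_right _ _ _
      have h2 : ‖s • H x‖ = s * ‖H x‖ := by
        rw [norm_smul, Real.norm_eq_abs, abs_of_nonneg hs0]
      have h3 : s * ⟪v, H x⟫ ≥ s * (c * ‖H x‖) :=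
        mul_le_mul_of_nonneg_left hinner' hs0
      have h4 : ‖v‖ = R := by rw [hv]
      rw [h1, h2, h4]
      nlinarith [hsH]
    nlinarith [norm_nonneg (v - s • H x)]
  have ht0le : t0 ≤ 2 * ρ := by
    have : c ≤ ρ := le_trans hcR hRρ
    rw [ht0]; linarith
  have hmem' : t0 ∈ {t ∈ Set.Icc (0 : ℝ) (2 * ρ) | x - (t / ‖H x‖) • H x ∈ closedBall a ρ} :=
    ⟨⟨by linarith, ht0le⟩, hmem⟩
  have hbddset : BddAbove {t ∈ Set.Icc (0 : ℝ) (2 * ρ) | x - (t / ‖H x‖) • H x ∈ closedBall a ρ} :=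
    ⟨2 * ρ, fun t ht => ht.1.2⟩
  have hle : t0 ≤ r := hr ▸ le_csSup hbddset hmem'
  calc 2 * ‖x - a‖ * (‖x - a‖ - σ) / (‖x - a‖ + σ) = t0 := by
        rw [ht0, hc, hR, hv]; ring
    _ ≤ r := hle
end

section
/- Set σ = sup{‖p − a‖ : p ∈ supp μ} (so σ < ρ). For every x ∈ B̄(a,ρ) with H(x) ≠ 0, the exit time r_x = sup{t ∈ [0,2ρ] : x − t·H(x)/‖H(x)‖ ∈ B̄(a,ρ)} satisfies r_x ≥ (ρ − σ)/2. -/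
open MeasureTheory Metric

lemma aux_supp_compl_null {α : Type*} [TopologicalSpace α] [SecondCountableTopology α]
    [MeasurableSpace α] (μ : Measure α) :
    μ ({x | ∀ U ∈ nhds x, 0 < μ U}ᶜ) = 0 := by
  set S : Set (Set α) := {V | IsOpen V ∧ μ V = 0} with hS
  obtain ⟨T, hTc, hTS, hTU⟩ :=
    TopologicalSpace.isOpen_sUnion_countable S (fun s hs => hs.1)
  have hsub : ({x | ∀ U ∈ nhds x, 0 < μ U}ᶜ : Set α) ⊆ ⋃₀ S := by
    intro x hx
    simp only [Set.mem_compl_iff, Set.mem_setOf_eq, not_forall] at hx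
    obtain ⟨U, hU, hμU⟩ := hx
    have hU0 : μ U = 0 := by
      by_contra h
      exact hμU (pos_iff_ne_zero.mpr h)
    obtain ⟨V, hVU, hVopen, hxV⟩ := mem_nhds_iff.1 hU
    exact ⟨V, ⟨hVopen, measure_mono_null hVU hU0⟩, hxV⟩
  have hT0 : μ (⋃₀ S) = 0 := by
    rw [← hTU]
    exact (measure_sUnion_null_iff hTc).2 fun s hs => (hTS hs).2
  exact measure_mono_null hsub hT0

set_option maxHeartbeats 1000000 in
/-- Euclidean case of Lemma 4.9, uniform lower bound on stepsizes.
With `σ = sup{‖p-a‖ : p ∈ supp μ}`, for every `x ∈ B̄(a,ρ)` with `H x ≠ 0`, the exit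
time `r_x = sup{t ∈ [0,2ρ] : x - t H(x)/‖H(x)‖ ∈ B̄(a,ρ)}` satisfies `r_x ≥ (ρ-σ)/2`. -/
theorem stmt16 {n : ℕ} (hn : 1 ≤ n) (a : EuclideanSpace ℝ (Fin n)) (ρ : ℝ) (hρ : 0 < ρ)
    (μ : Measure (EuclideanSpace ℝ (Fin n))) [IsProbabilityMeasure μ]
    (hsupp : {x : EuclideanSpace ℝ (Fin n) | ∀ U ∈ nhds x, 0 < μ U} ⊆ ball a ρ)
    (H : EuclideanSpace ℝ (Fin n) → EuclideanSpace ℝ (Fin n))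
    (hH : ∀ x, H x = ∫ p in ({x}ᶜ : Set (EuclideanSpace ℝ (Fin n))), ‖x - p‖⁻¹ • (x - p) ∂μ)
    (σ : ℝ)
    (hσ : σ = sSup ((fun p => ‖p - a‖) '' {x : EuclideanSpace ℝ (Fin n) | ∀ U ∈ nhds x, 0 < μ U}))
    (x : EuclideanSpace ℝ (Fin n)) (hx : x ∈ closedBall a ρ) (hHx : H x ≠ 0)
    (r : ℝ)
    (hr : r = sSup {t ∈ Set.Icc (0 : ℝ) (2 * ρ) | x - (t / ‖H x‖) • H x ∈ closedBall a ρ}) :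
    r ≥ (ρ - σ) / 2 := by
  classical
  set A : Set (EuclideanSpace ℝ (Fin n)) := {x | ∀ U ∈ nhds x, 0 < μ U} with hA
  have hball : ∀ p ∈ A, ‖p - a‖ < ρ := by
    intro p hp
    simpa [dist_eq_norm] using hsupp hp
  have hsuppσ : ∀ p ∈ A, ‖p - a‖ ≤ σ := by
    intro p hp
    rw [hσ]
    refine le_csSup ⟨ρ, ?_⟩ ⟨p, hp, rfl⟩
    rintro y ⟨q, hq, rfl⟩
    exact (hball q hq).le
  have hσ0 : 0 ≤ σ := by
    rw [hσ]
    refine Real.sSup_nonneg ?_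
    rintro y ⟨q, hq, rfl⟩
    positivity
  have hσρ : σ ≤ ρ := by
    rw [hσ]
    refine Real.sSup_le ?_ hρ.le
    rintro y ⟨q, hq, rfl⟩
    exact (hball q hq).le
  set t0 : ℝ := (ρ - σ) / 2 with ht0
  have ht00 : 0 ≤ t0 := by rw [ht0]; linarith
  set d : ℝ := ‖x - a‖ with hd
  have hd0 : 0 ≤ d := norm_nonneg _
  have hdρ : d ≤ ρ := by
    rw [hd, ← dist_eq_norm]
    exact mem_closedBall.1 hx
  have hHpos : 0 < ‖H x‖ := norm_pos_iff.2 hHx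
  set u : EuclideanSpace ℝ (Fin n) := ‖H x‖⁻¹ • H x with hu
  have hnu : ‖u‖ = 1 := by
    rw [hu, norm_smul, norm_inv, norm_norm, inv_mul_cancel₀ hHpos.ne']
  have hpt : x - (t0 / ‖H x‖) • H x = x - t0 • u := by
    rw [hu, smul_smul, div_eq_mul_inv]
  -- main claim: the point at time t0 is in the ball
  have hin : x - t0 • u ∈ closedBall a ρ := by
    by_cases hcase : d ≤ (ρ + σ) / 2
    · have h1 : ‖x - t0 • u - a‖ ≤ d + t0 := by
        have he : x - t0 • u - a = (x - a) - t0 • u := by abel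
        rw [he]
        refine (norm_sub_le _ _).trans ?_
        rw [norm_smul, hnu, mul_one, Real.norm_eq_abs, abs_of_nonneg ht00, ← hd]
      rw [mem_closedBall, dist_eq_norm]
      rw [ht0] at h1 ⊢
      linarith
    · push_neg at hcase
      have hdσ : σ < d := by linarith
      -- x is not in the support
      have hxA : x ∉ A := fun hxA => absurd (hsuppσ x hxA) (by rw [← hd]; linarith)
      have hx0 : μ {x} = 0 := by
        simp only [hA, Set.mem_setOf_eq, not_forall] at hxA
        obtain ⟨U, hU, hμU⟩ := hxA
        have hU0 : μ U = 0 := by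
          by_contra h
          exact hμU (pos_iff_ne_zero.mpr h)
        exact measure_mono_null (Set.singleton_subset_iff.2 (mem_of_mem_nhds hU)) hU0
      have hxc : μ ({x}ᶜ : Set (EuclideanSpace ℝ (Fin n))) = 1 := by
        rw [measure_compl (measurableSet_singleton x) (measure_ne_top μ _), hx0,
          measure_univ, tsub_zero]
      set μ' := μ.restrict ({x}ᶜ : Set (EuclideanSpace ℝ (Fin n))) with hμ'
      have hμ'univ : μ' Set.univ = 1 := by
        rw [hμ', Measure.restrict_apply_univ, hxc]
      -- integrand
      set F : EuclideanSpace ℝ (Fin n) → EuclideanSpace ℝ (Fin n) :=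
        fun p => ‖x - p‖⁻¹ • (x - p) with hF
      have hFmeas : Measurable F := by
        fun_prop
      have hFbound : ∀ p, ‖F p‖ ≤ 1 := by
        intro p
        rcases eq_or_ne (x - p) 0 with h | h
        · simp [hF, h]
        · simp only [hF, norm_smul, norm_inv, norm_norm]
          rw [inv_mul_cancel₀ (norm_pos_iff.2 h).ne']
      have hFint : Integrable F μ' :=
        (integrable_const (1 : ℝ)).mono' hFmeas.aestronglyMeasurable
          (Filter.Eventually.of_forall fun p => by simpa using hFbound p)
      -- the inner product with x - a
      set g : EuclideanSpace ℝ (Fin n) → ℝ := fun p => inner ℝ (x - a) (F p) with hg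
      have hginteq : ∫ p, g p ∂μ' = (inner ℝ (x - a) (H x) : ℝ) := by
        rw [hH x]
        exact integral_inner hFint (x - a)
      have hgmeas : Measurable g := measurable_const.inner hFmeas
      have hgbound : ∀ p, ‖g p‖ ≤ d := by
        intro p
        calc ‖g p‖ ≤ ‖x - a‖ * ‖F p‖ := norm_inner_le_norm _ _
          _ ≤ d * 1 := mul_le_mul (le_of_eq hd.symm) (hFbound p) (norm_nonneg _) hd0
          _ = d := mul_one d
      have hgint : Integrable g μ' :=
        (integrable_const d).mono' hgmeas.aestronglyMeasurable
          (Filter.Eventually.of_forall hgbound)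
      set K : ℝ := d * (d - σ) / (d + σ) with hK
      have hdsum : 0 < d + σ := by linarith
      have hK0 : 0 ≤ K := by
        rw [hK]
        apply div_nonneg (by nlinarith) hdsum.le
      -- a.e. lower bound on g
      have haeA : ∀ᵐ p ∂μ', p ∈ A := by
        have hle : μ' Aᶜ ≤ μ Aᶜ := Measure.restrict_le_self _
        have h0 : μ Aᶜ = 0 := aux_supp_compl_null μ
        have : μ' Aᶜ = 0 := le_antisymm (h0 ▸ hle) (zero_le)
        exact this
      have haex : ∀ᵐ p ∂μ', p ∈ ({x}ᶜ : Set (EuclideanSpace ℝ (Fin n))) :=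
        ae_restrict_mem (measurableSet_singleton x).compl
      have haeg : ∀ᵐ p ∂μ', K ≤ g p := by
        filter_upwards [haeA, haex] with p hpA hpx
        have hpa : ‖p - a‖ ≤ σ := hsuppσ p hpA
        have hpx' : x - p ≠ 0 := sub_ne_zero.2 (Ne.symm hpx)
        have hxp_pos : 0 < ‖x - p‖ := norm_pos_iff.2 hpx'
        have hxp_le : ‖x - p‖ ≤ d + σ := by
          have he : x - p = (x - a) + (a - p) := by abel
          rw [he]
          refine (norm_add_le _ _).trans ?_
          have : ‖a - p‖ ≤ σ := by rw [← norm_neg (a - p)]; simpa [neg_sub] using hpa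
          rw [← hd]
          linarith
        have hip : d * (d - σ) ≤ (inner ℝ (x - a) (x - p) : ℝ) := by
          have hsplit : (inner ℝ (x - a) (x - p) : ℝ)
              = ‖x - a‖ ^ 2 + (inner ℝ (x - a) (a - p) : ℝ) := by
            rw [← real_inner_self_eq_norm_sq, ← inner_add_right]
            congr 1
            abel
          have hcs : |(inner ℝ (x - a) (a - p) : ℝ)| ≤ d * σ := by
            refine (abs_real_inner_le_norm _ _).trans ?_
            rw [← hd]
            refine mul_le_mul le_rfl ?_ (norm_nonneg _) hd0
            rw [← norm_neg (a - p)]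
            simpa [neg_sub] using hpa
          have hcs' := (abs_le.1 hcs).1
          rw [hsplit, ← hd]
          nlinarith
        have hgform : g p = (inner ℝ (x - a) (x - p) : ℝ) / ‖x - p‖ := by
          show (inner ℝ (x - a) (‖x - p‖⁻¹ • (x - p)) : ℝ) = _
          rw [real_inner_smul_right]
          ring
        rw [hgform, hK]
        exact div_le_div₀ (le_trans (mul_nonneg hd0 (by linarith)) hip) hip hxp_pos hxp_le
      -- K ≤ ⟪x-a, H x⟫
      have hKH : K ≤ (inner ℝ (x - a) (H x) : ℝ) := by
        rw [← hginteq]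
        calc K = ∫ _, K ∂μ' := by
              rw [integral_const]
              simp [Measure.real, hμ'univ]
          _ ≤ ∫ p, g p ∂μ' := integral_mono_ae (integrable_const K) hgint haeg
      -- ‖H x‖ ≤ 1
      have hHle : ‖H x‖ ≤ 1 := by
        rw [hH x]
        calc ‖∫ p in ({x}ᶜ : Set (EuclideanSpace ℝ (Fin n))), ‖x - p‖⁻¹ • (x - p) ∂μ‖
            ≤ 1 * μ.real ({x}ᶜ : Set (EuclideanSpace ℝ (Fin n))) :=
              norm_setIntegral_le_of_norm_le_const (by rw [hxc]; exact ENNReal.one_lt_top)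
                (fun p _ => hFbound p)
          _ = 1 := by rw [Measure.real, hxc]; simp
      -- c := ⟪x-a, u⟫ ≥ K
      have hcK : K ≤ (inner ℝ (x - a) u : ℝ) := by
        have hinv : 1 ≤ ‖H x‖⁻¹ := (one_le_inv₀ hHpos).2 hHle
        have h1 : (inner ℝ (x - a) (H x) : ℝ) ≤ ‖H x‖⁻¹ * (inner ℝ (x - a) (H x) : ℝ) := by
          nlinarith [le_trans hK0 hKH]
        rw [hu, real_inner_smul_right]
        exact le_trans hKH h1
      have hcd : (inner ℝ (x - a) u : ℝ) ≤ d := by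
        refine (real_inner_le_norm _ _).trans ?_
        rw [hnu, ← hd, mul_one]
      set c : ℝ := inner ℝ (x - a) u with hc
      have hcK' : d * (d - σ) ≤ c * (d + σ) := by
        have := hcK
        rw [hK, div_le_iff₀ hdsum] at this
        linarith
      -- compute the squared norm
      have hsq : ‖x - t0 • u - a‖ ^ 2 = d ^ 2 - 2 * t0 * c + t0 ^ 2 := by
        have he : x - t0 • u - a = (x - a) - t0 • u := by abel
        rw [he, norm_sub_sq_real, real_inner_smul_right, ← hc, ← hd, norm_smul, hnu,
          Real.norm_eq_abs, abs_of_nonneg ht00]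
        ring
      have hsq' : ‖x - t0 • u - a‖ ^ 2 ≤ ρ ^ 2 := by
        rw [hsq, ht0]
        nlinarith [mul_nonneg (sub_nonneg.2 hσρ) (le_trans hK0 hcK), sq_nonneg (d - ρ),
          sq_nonneg (d + σ), mul_nonneg hd0 hσ0]
      rw [mem_closedBall, dist_eq_norm]
      nlinarith [norm_nonneg (x - t0 • u - a), hρ.le, hsq']
  -- conclude
  have hbdd : BddAbove {t ∈ Set.Icc (0 : ℝ) (2 * ρ) | x - (t / ‖H x‖) • H x ∈ closedBall a ρ} :=
    ⟨2 * ρ, fun t ht => ht.1.2⟩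
  have hmem : t0 ∈ {t ∈ Set.Icc (0 : ℝ) (2 * ρ) | x - (t / ‖H x‖) • H x ∈ closedBall a ρ} :=
    ⟨⟨ht00, by rw [ht0]; linarith⟩, by rw [hpt]; exact hin⟩
  rw [hr]
  exact le_csSup hbdd hmem
end
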